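/- Let n ≥ 1, K ≥ 1 be integers, let X be a nonempty finite family of nonempty subsets of {1,…,n} (identified with their characteristic vectors in {0,1}^n), let ĉ ∈ ℝ^n with ĉ_i ≥ 0 for all i, let M ∈ ℝ with M ≥ Σ_{i=1}^n ĉ_i, set the deviation vector d = (M,…,M) and the budget Γ = K−1, and let L ∈ ℝ with L < M. Then the min-max-min value min_{(x^1,…,x^K)∈X^K} max_{c∈U^{K−1}(ĉ,d)} min_{k∈{1,…,K}} c^⊤x^k is at most L if and only if there exist x^1,…,x^K ∈ X that are pairwise disjoint as subsets of {1,…,n} and satisfy ĉ^⊤x^k ≤ L for every k ∈ {1,…,K}. -/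
import Mathlib


open Finset

/-- The discrete budgeted uncertainty set
`U^Γ(ĉ,d) = { c : c i = ĉ i + δ i * d i, δ ∈ {0,1}^n, ∑ i, δ i ≤ Γ }`,
with the 0-1 vector `δ` identified with the set `D` of its nonzero coordinates. -/
noncomputable def budgetU (n : ℕ) (chat d : Fin n → ℝ) (Γ : ℕ) : Finset (Fin n → ℝ) :=
  (((Finset.univ : Finset (Fin n)).powerset.filter fun D => D.card ≤ Γ).image
    fun D i => chat i + (if i ∈ D then d i else 0))

lemma budgetU_nonempty (n : ℕ) (chat d : Fin n → ℝ) (Γ : ℕ) :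
    (budgetU n chat d Γ).Nonempty :=
  ⟨_, Finset.mem_image.mpr ⟨∅, by simp, rfl⟩⟩

lemma mem_budgetU_of_card {n : ℕ} {chat : Fin n → ℝ} {M : ℝ} {Γ : ℕ}
    (D : Finset (Fin n)) (hD : D.card ≤ Γ) :
    (fun i => chat i + (if i ∈ D then M else 0)) ∈ budgetU n chat (fun _ => M) Γ :=
  Finset.mem_image.mpr ⟨D, Finset.mem_filter.mpr ⟨Finset.mem_powerset.mpr (Finset.subset_univ D), hD⟩, rfl⟩

lemma sum_lower {n : ℕ} {chat : Fin n → ℝ} (hchat : ∀ i, 0 ≤ chat i) {M : ℝ} (hM : 0 ≤ M)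
    {S D : Finset (Fin n)} {i0 : Fin n} (hi0S : i0 ∈ S) (hi0D : i0 ∈ D) :
    M ≤ ∑ i ∈ S, (chat i + (if i ∈ D then M else 0)) := by
  have h1 : chat i0 + (if i0 ∈ D then M else 0) ≤ ∑ i ∈ S, (chat i + (if i ∈ D then M else 0)) := by
    apply Finset.single_le_sum (f := fun i => chat i + (if i ∈ D then M else 0)) _ hi0S
    intro i _
    have := hchat i
    by_cases h : i ∈ D <;> simp [h] <;> linarith
  rw [if_pos hi0D] at h1
  have := hchat i0
  linarith

lemma sum_eq_of_disjoint {n : ℕ} {chat : Fin n → ℝ} {M : ℝ}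
    {S D : Finset (Fin n)} (h : ∀ i ∈ S, i ∉ D) :
    ∑ i ∈ S, (chat i + (if i ∈ D then M else 0)) = ∑ i ∈ S, chat i := by
  apply Finset.sum_congr rfl
  intro i hi
  rw [if_neg (h i hi), add_zero]

/-- for a family `X` of nonempty subsets of `[n]`, nonnegative nominal
costs `ĉ`, uniform deviations `M ≥ ∑ ĉ`, budget `Γ = K - 1` and any threshold
`L < M`, the min-max-min value is at most `L` iff there are `K` pairwise disjoint
feasible solutions each of nominal cost at most `L`. -/
theorem minmaxmin_le_iff_disjoint (n K : ℕ) (hn : 1 ≤ n) (hK : 1 ≤ K)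
    (X : Finset (Finset (Fin n))) (hX : X.Nonempty)
    (hXne : ∀ S ∈ X, S.Nonempty)
    (chat : Fin n → ℝ) (hchat : ∀ i, 0 ≤ chat i)
    (M : ℝ) (hM : ∑ i, chat i ≤ M)
    (L : ℝ) (hL : L < M) :
    ((Fintype.piFinset fun _ : Fin K => X).inf'
        (Fintype.piFinset_nonempty.mpr fun _ => hX)
        fun xs => (budgetU n chat (fun _ => M) (K - 1)).sup' (budgetU_nonempty _ _ _ _)
          fun c => Finset.univ.inf' (Finset.univ_nonempty_iff.mpr ⟨⟨0, hK⟩⟩)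
            fun k => ∑ i ∈ xs k, c i) ≤ L ↔
    ∃ xs : Fin K → Finset (Fin n), (∀ k, xs k ∈ X) ∧
      (∀ k l, k ≠ l → Disjoint (xs k) (xs l)) ∧
      ∀ k, (∑ i ∈ xs k, chat i) ≤ L := by
  have hM0 : 0 ≤ M := le_trans (Finset.sum_nonneg fun i _ => hchat i) hM
  constructor
  · intro h
    obtain ⟨xs, hxs, hval⟩ := (Finset.inf'_le_iff _).mp h
    have hxsX : ∀ k, xs k ∈ X := fun k => (Fintype.mem_piFinset.mp hxs) k
    have hsup : ∀ c ∈ budgetU n chat (fun _ => M) (K - 1),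
        (Finset.univ.inf' (Finset.univ_nonempty_iff.mpr ⟨⟨0, hK⟩⟩)
          fun k => ∑ i ∈ xs k, c i) ≤ L := (Finset.sup'_le_iff _ _).mp hval
    choose e he using fun k => hXne (xs k) (hxsX k)
    -- key: for any D of card ≤ K-1, some k has ∑_{xs k} c_D ≤ L
    have key : ∀ D : Finset (Fin n), D.card ≤ K - 1 →
        ∃ m, ∑ i ∈ xs m, (chat i + (if i ∈ D then M else 0)) ≤ L := by
      intro D hDc
      have := hsup _ (mem_budgetU_of_card D hDc)
      exact ((Finset.inf'_le_iff _).mp this).imp fun m hm => hm.2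
    -- disjointness
    have hdisj : ∀ k l, k ≠ l → Disjoint (xs k) (xs l) := by
      by_contra hcon
      push_neg at hcon
      obtain ⟨k, l, hkl, hnd⟩ := hcon
      obtain ⟨a, hak, hal⟩ := Finset.not_disjoint_iff.mp hnd
      have hK2 : 2 ≤ K := by
        by_contra hlt
        have hk1 : K = 1 := by omega
        exact hkl (Fin.ext (by omega))
      set D : Finset (Fin n) := insert a (((Finset.univ.erase k).erase l).image e) with hD
      have hDc : D.card ≤ K - 1 := by
        have h1 : D.card ≤ (((Finset.univ.erase k).erase l).image e).card + 1 :=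
          Finset.card_insert_le _ _
        have h2 : (((Finset.univ.erase k).erase l).image e).card ≤
            ((Finset.univ.erase k).erase l).card := Finset.card_image_le
        have h3 : ((Finset.univ.erase k).erase l).card = K - 2 := by
          rw [Finset.card_erase_of_mem (Finset.mem_erase.mpr ⟨Ne.symm hkl, Finset.mem_univ l⟩),
            Finset.card_erase_of_mem (Finset.mem_univ k), Finset.card_univ, Fintype.card_fin]
          omega
        omega
      obtain ⟨m, hm⟩ := key D hDc
      have hhit : ∃ i0, i0 ∈ xs m ∧ i0 ∈ D := by
        by_cases hmk : m = k
        · exact ⟨a, hmk ▸ hak, Finset.mem_insert_self _ _⟩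
        by_cases hml : m = l
        · exact ⟨a, hml ▸ hal, Finset.mem_insert_self _ _⟩
        refine ⟨e m, he m, Finset.mem_insert_of_mem ?_⟩
        exact Finset.mem_image_of_mem e (Finset.mem_erase.mpr ⟨hml,
          Finset.mem_erase.mpr ⟨hmk, Finset.mem_univ m⟩⟩)
      obtain ⟨i0, hi0S, hi0D⟩ := hhit
      have := sum_lower hchat hM0 hi0S hi0D
      linarith
    -- nominal costs
    refine ⟨xs, hxsX, hdisj, fun k => ?_⟩
    set D : Finset (Fin n) := (Finset.univ.erase k).image e with hD
    have hDc : D.card ≤ K - 1 := by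
      have h2 : D.card ≤ (Finset.univ.erase k).card := Finset.card_image_le
      have h3 : (Finset.univ.erase k).card = K - 1 := by
        rw [Finset.card_erase_of_mem (Finset.mem_univ k), Finset.card_univ, Fintype.card_fin]
      omega
    obtain ⟨m, hm⟩ := key D hDc
    have hmk : m = k := by
      by_contra hmk
      have hed : e m ∈ D := Finset.mem_image_of_mem e (Finset.mem_erase.mpr ⟨hmk, Finset.mem_univ m⟩)
      have := sum_lower hchat hM0 (he m) hed
      linarith
    subst hmk
    have hnot : ∀ i ∈ xs m, i ∉ D := by
      intro i hi hiD
      obtain ⟨m', hm', hem'⟩ := Finset.mem_image.mp hiD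
      have hne : m' ≠ m := (Finset.mem_erase.mp hm').1
      exact Finset.disjoint_left.mp (hdisj m m' (Ne.symm hne)) hi (hem' ▸ he m')
    rw [sum_eq_of_disjoint hnot] at hm
    exact hm
  · rintro ⟨xs, hxsX, hdisj, hcost⟩
    refine le_trans (Finset.inf'_le _ (Fintype.mem_piFinset.mpr hxsX)) ?_
    apply Finset.sup'_le
    intro c hc
    obtain ⟨D, hD, rfl⟩ := Finset.mem_image.mp hc
    have hDc : D.card ≤ K - 1 := (Finset.mem_filter.mp hD).2
    have hfree : ∃ k : Fin K, ∀ i ∈ xs k, i ∉ D := by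
      by_contra hcon
      push_neg at hcon
      choose g hg1 hg2 using hcon
      have hinj : Set.InjOn g ↑(Finset.univ : Finset (Fin K)) := by
        intro k _ l _ hkl
        by_contra hne
        exact Finset.disjoint_left.mp (hdisj k l hne) (hg1 k) (hkl ▸ hg1 l)
      have := Finset.card_le_card_of_injOn g (fun k _ => hg2 k) hinj
      simp only [Finset.card_univ, Fintype.card_fin] at this
      omega
    obtain ⟨k, hk⟩ := hfree
    refine le_trans (Finset.inf'_le _ (Finset.mem_univ k)) ?_
    calc ∑ i ∈ xs k, (chat i + (if i ∈ D then M else 0)) = ∑ i ∈ xs k, chat i :=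
          sum_eq_of_disjoint hk
      _ ≤ L := hcost k
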